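/- Let {Y_i, 1 ≤ i ≤ n} be independent Bernoulli random variables with P(Y_i = 1) = 1/(b+i), b ≥ 0, and T_2(n) = ∑_{k=1}^{n-2} Y_k Y_{k+1}(1−Y_{k+2}). Then for n > 2, E(T_2(n)) = (1/2)·[ (3+2b)/((1+b)(2+b)) − (2n+2b−1)/((n+b−1)(n+b)) ]. -/

import Mathlib

open MeasureTheory ProbabilityTheory

section Aux
variable {Ω : Type*} {m0 : MeasurableSpace Ω} {μ : Measure Ω} [IsProbabilityMeasure μ]

lemma aux_integrable {f : Ω → ℝ} (hf : Measurable f) (h01 : ∀ ω, f ω = 0 ∨ f ω = 1) :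
    Integrable f μ := by
  refine (integrable_const (1:ℝ)).mono' hf.aestronglyMeasurable (ae_of_all _ fun ω => ?_)
  rcases h01 ω with h | h <;> simp [h]

lemma aux_integral {f : Ω → ℝ} (hf : Measurable f) (h01 : ∀ ω, f ω = 0 ∨ f ω = 1) :
    ∫ ω, f ω ∂μ = (μ {ω | f ω = 1}).toReal := by
  have hset : MeasurableSet {ω | f ω = 1} := hf (measurableSet_singleton 1)
  have hf' : f = Set.indicator {ω | f ω = 1} (fun _ => (1:ℝ)) := by
    funext ω
    rcases h01 ω with h | h <;> simp [Set.indicator, h]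
  rw [hf', integral_indicator_const _ hset]
  simp
  rfl

end Aux

lemma aux_tele (b : ℝ) (hb : 0 ≤ b) (n : ℕ) (hn : 3 ≤ n) :
    ∑ k ∈ Finset.Icc 1 (n-2), (1/2) * (1/(b+(k:ℝ)) - 1/(b+(k:ℝ)+2))
    = (1/2) * ((3 + 2*b)/((1+b)*(2+b))
        - (2*(n:ℝ) + 2*b - 1)/(((n:ℝ)+b-1)*((n:ℝ)+b))) := by
  induction n, hn using Nat.le_induction with
  | base =>
      rw [show (3-2 : ℕ) = 1 from rfl, Finset.Icc_self, Finset.sum_singleton]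
      have h1 : (1:ℝ)+b ≠ 0 := by positivity
      have h2 : (2:ℝ)+b ≠ 0 := by positivity
      have h3 : (3:ℝ)+b ≠ 0 := by positivity
      have h1' : b+(1:ℝ) ≠ 0 := by positivity
      have h3' : b+(3:ℝ) ≠ 0 := by positivity
      have h4 : (3:ℝ)+b-1 ≠ 0 := by nlinarith
      push_cast
      field_simp
      ring
  | succ n hn ih =>
      have h2 : n + 1 - 2 = (n-2) + 1 := by omega
      rw [h2, Finset.sum_Icc_succ_top (by omega : 1 ≤ n - 2 + 1), ih]
      have hc : ((n - 2 + 1 : ℕ) : ℝ) = (n:ℝ) - 1 := by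
        have : (n - 2 + 1 : ℕ) = n - 1 := by omega
        rw [this]; push_cast [Nat.cast_sub (by omega : 1 ≤ n)]; ring
      rw [hc]
      have hn3 : (3:ℝ) ≤ (n:ℝ) := by exact_mod_cast hn
      have d1 : (n:ℝ)+b-1 ≠ 0 := by nlinarith
      have d2 : (n:ℝ)+b ≠ 0 := by nlinarith
      have d3 : (n:ℝ)+b+1 ≠ 0 := by nlinarith
      have d4 : b+((n:ℝ)-1) ≠ 0 := by nlinarith
      have d5 : b+((n:ℝ)-1)+2 ≠ 0 := by nlinarith
      have e1 : ((n:ℝ)+1)+b-1 ≠ 0 := by nlinarith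
      have e2 : ((n:ℝ)+1)+b ≠ 0 := by nlinarith
      push_cast
      field_simp
      ring

/-- For independent Bernoulli trials with `P(Y i = 1) = 1/(b+i)` (`b ≥ 0`), the expected
number of tails of dependence cycles of length at least 2,
`T₂(n) = ∑_{k=1}^{n-2} Y_k Y_{k+1} (1 - Y_{k+2})`, satisfies, for `n > 2`,
`E(T₂(n)) = (1/2)((3+2b)/((1+b)(2+b)) - (2n+2b-1)/((n+b-1)(n+b)))`. -/
theorem stmt11 {Ω : Type*} {m0 : MeasurableSpace Ω} (μ : Measure Ω) [IsProbabilityMeasure μ]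
    (Y : ℕ → Ω → ℝ) (b : ℝ) (hb : 0 ≤ b)
    (hmeas : ∀ i, Measurable (Y i))
    (h01 : ∀ i ω, Y i ω = 0 ∨ Y i ω = 1)
    (hindep : iIndepFun Y μ)
    (hbern : ∀ i : ℕ, 1 ≤ i → μ {ω | Y i ω = 1} = ENNReal.ofReal (1 / (b + i)))
    (n : ℕ) (hn : 2 < n) :
    ∫ ω, (∑ k ∈ Finset.Icc 1 (n - 2), Y k ω * Y (k + 1) ω * (1 - Y (k + 2) ω)) ∂μ
      = (1 / 2) * ((3 + 2 * b) / ((1 + b) * (2 + b))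
          - (2 * n + 2 * b - 1) / (((n : ℝ) + b - 1) * ((n : ℝ) + b))) := by
  have hpos : ∀ i : ℕ, 1 ≤ i → (0:ℝ) < b + i := by
    intro i hi
    have : (1:ℝ) ≤ (i:ℝ) := by exact_mod_cast hi
    linarith
  have hEY : ∀ i : ℕ, 1 ≤ i → ∫ ω, Y i ω ∂μ = 1/(b+i) := by
    intro i hi
    rw [aux_integral (hmeas i) (h01 i), hbern i hi,
      ENNReal.toReal_ofReal (by positivity)]
  -- 0/1-valuedness of products
  have h01m : ∀ i j, ∀ ω, Y i ω * Y j ω = 0 ∨ Y i ω * Y j ω = 1 := by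
    intro i j ω
    rcases h01 i ω with h | h <;> rcases h01 j ω with h' | h' <;> simp [h, h']
  have h01m3 : ∀ i j k, ∀ ω, Y i ω * Y j ω * Y k ω = 0 ∨ Y i ω * Y j ω * Y k ω = 1 := by
    intro i j k ω
    rcases h01m i j ω with h | h <;> rcases h01 k ω with h' | h' <;> simp [h, h']
  have hint2 : ∀ i j, Integrable (fun ω => Y i ω * Y j ω) μ :=
    fun i j => aux_integrable ((hmeas i).mul (hmeas j)) (h01m i j)
  have hint3 : ∀ i j k, Integrable (fun ω => Y i ω * Y j ω * Y k ω) μ :=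
    fun i j k => aux_integrable (((hmeas i).mul (hmeas j)).mul (hmeas k)) (h01m3 i j k)
  -- expectation of each term
  have hterm : ∀ k : ℕ, 1 ≤ k →
      ∫ ω, Y k ω * Y (k+1) ω * (1 - Y (k+2) ω) ∂μ
        = (1/2) * (1/(b+(k:ℝ)) - 1/(b+(k:ℝ)+2)) := by
    intro k hk
    have hE2 : ∫ ω, Y k ω * Y (k+1) ω ∂μ = (1/(b+(k:ℝ))) * (1/(b+(k:ℝ)+1)) := by
      rw [(hindep.indepFun (by omega : k ≠ k+1)).integral_fun_mul_eq_mul_integral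
          (hmeas k).aestronglyMeasurable (hmeas (k+1)).aestronglyMeasurable,
        hEY k hk, hEY (k+1) (by omega)]
      push_cast; ring_nf
    have hE3 : ∫ ω, Y k ω * Y (k+1) ω * Y (k+2) ω ∂μ
        = (1/(b+(k:ℝ))) * (1/(b+(k:ℝ)+1)) * (1/(b+(k:ℝ)+2)) := by
      have hind := hindep.indepFun_mul_left hmeas k (k+1) (k+2)
        (by omega) (by omega)
      have := hind.integral_mul_eq_mul_integral
        (((hmeas k).mul (hmeas (k+1))).aestronglyMeasurable)
        (hmeas (k+2)).aestronglyMeasurable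
      simp only [Pi.mul_apply] at this
      rw [show (fun ω => Y k ω * Y (k+1) ω * Y (k+2) ω)
          = fun ω => (Y k ω * Y (k+1) ω) * Y (k+2) ω from rfl]
      rw [this, hE2, hEY (k+2) (by omega)]
      push_cast; ring_nf
    have heq : (fun ω => Y k ω * Y (k+1) ω * (1 - Y (k+2) ω))
        = fun ω => Y k ω * Y (k+1) ω - Y k ω * Y (k+1) ω * Y (k+2) ω := by
      funext ω; ring
    rw [heq, integral_sub (hint2 k (k+1)) (hint3 k (k+1) (k+2)), hE2, hE3]
    have p1 : (0:ℝ) < b + k := hpos k hk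
    have p2 : (0:ℝ) < b + k + 1 := by linarith
    have p3 : (0:ℝ) < b + k + 2 := by linarith
    field_simp
    ring
  -- put it together
  rw [integral_finset_sum]
  · rw [Finset.sum_congr rfl (fun k hk => hterm k (Finset.mem_Icc.mp hk).1)]
    exact aux_tele b hb n hn
  · intro k hk
    have : (fun ω => Y k ω * Y (k+1) ω * (1 - Y (k+2) ω))
        = fun ω => Y k ω * Y (k+1) ω - Y k ω * Y (k+1) ω * Y (k+2) ω := by
      funext ω; ring
    rw [this]
    exact (hint2 k (k+1)).sub (hint3 k (k+1) (k+2))
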